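/- arXiv:1402.7235 — 4 statements merged into one kernel-verified Lean document; each statement's English description precedes it below -/
import Mathlib

section
/- Let G be a finite simple graph, ℓ ≥ 1, and let L₀, L₁ be ℓ-links of G. Then there is at most one (ℓ+1)-link Q of G such that L₀ and L₁ are the two length-ℓ subsequences of Q. Consequently, the ℓ-link graph of a simple graph is simple. -/
/-- A multigraph: a type of vertices, a type of edges, and an incidence map
sending each edge to an unordered pair of vertices. -/
structure Multigraph (V E : Type) where
  inc : E → Sym2 V

namespace Multigraph

variable {V E : Type}

/-- A multigraph is loopless if no edge joins a vertex to itself. -/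
def Loopless (G : Multigraph V E) : Prop := ∀ e : E, ¬ (G.inc e).IsDiag

/-- A multigraph is simple if it is loopless and has no parallel edges. -/
def Simple (G : Multigraph V E) : Prop := G.Loopless ∧ Function.Injective G.inc

/-- The underlying simple graph of a multigraph. -/
def toSimple (G : Multigraph V E) : SimpleGraph V where
  Adj u v := u ≠ v ∧ ∃ e : E, G.inc e = s(u, v)
  symm := by
    constructor
    rintro u v ⟨huv, e, he⟩
    exact ⟨Ne.symm huv, e, by rw [he, Sym2.eq_swap]⟩
  loopless := by constructor; rintro v ⟨h, _⟩; exact h rfl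

/-- The degree of a vertex: the number of edges incident to it. -/
noncomputable def degree (G : Multigraph V E) (v : V) : ℕ := Nat.card {e : E // v ∈ G.inc e}

/-- The number of edges of a multigraph. -/
noncomputable def edgeCard (_G : Multigraph V E) : ℕ := Nat.card E

/-- An `ℓ`-arc (non-backtracking walk of length `ℓ`): an alternating sequence of
vertices and edges with consecutive edges distinct. -/
@[ext]
structure Arc (G : Multigraph V E) (ℓ : ℕ) where
  verts : Fin (ℓ + 1) → V
  edges : Fin ℓ → E
  inc_eq : ∀ i : Fin ℓ, G.inc (edges i) = s(verts i.castSucc, verts i.succ)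
  nb : ∀ i j : Fin ℓ, (i : ℕ) + 1 = (j : ℕ) → edges i ≠ edges j

variable {G : Multigraph V E}

/-- The reverse of an arc. -/
def Arc.reverse {ℓ : ℕ} (A : G.Arc ℓ) : G.Arc ℓ where
  verts i := A.verts i.rev
  edges i := A.edges i.rev
  inc_eq i := by
    show G.inc (A.edges i.rev) = s(A.verts i.castSucc.rev, A.verts i.succ.rev)
    rw [Fin.rev_castSucc, Fin.rev_succ, A.inc_eq i.rev, Sym2.eq_swap]
  nb i j hij h := by
    refine A.nb j.rev i.rev ?_ (h.symm)
    have hi := i.isLt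
    have hj := j.isLt
    simp only [Fin.val_rev]
    omega

lemma Arc.reverse_reverse {ℓ : ℕ} (A : G.Arc ℓ) : A.reverse.reverse = A := by
  ext i
  · show A.verts i.rev.rev = A.verts i
    rw [Fin.rev_rev]
  · show A.edges i.rev.rev = A.edges i
    rw [Fin.rev_rev]

/-- The length-`ℓ` prefix of an `(ℓ+1)`-arc. -/
def Arc.init {ℓ : ℕ} (A : G.Arc (ℓ + 1)) : G.Arc ℓ where
  verts i := A.verts i.castSucc
  edges i := A.edges i.castSucc
  inc_eq i := by
    show G.inc (A.edges i.castSucc) = s(A.verts i.castSucc.castSucc, A.verts i.succ.castSucc)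
    rw [A.inc_eq i.castSucc, Fin.succ_castSucc]
  nb i j hij h := A.nb i.castSucc j.castSucc (by simpa using hij) h

/-- The length-`ℓ` suffix of an `(ℓ+1)`-arc. -/
def Arc.tail {ℓ : ℕ} (A : G.Arc (ℓ + 1)) : G.Arc ℓ where
  verts i := A.verts i.succ
  edges i := A.edges i.succ
  inc_eq i := by
    show G.inc (A.edges i.succ) = s(A.verts i.castSucc.succ, A.verts i.succ.succ)
    rw [A.inc_eq i.succ, Fin.succ_castSucc]
  nb i j hij h := A.nb i.succ j.succ (by simpa using hij) h

lemma Arc.reverse_init {ℓ : ℕ} (A : G.Arc (ℓ + 1)) : A.reverse.init = A.tail.reverse := by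
  ext i
  · show A.verts (Fin.castSucc i).rev = A.verts i.rev.succ
    rw [Fin.rev_castSucc]
  · show A.edges (Fin.castSucc i).rev = A.edges i.rev.succ
    rw [Fin.rev_castSucc]

lemma Arc.reverse_tail {ℓ : ℕ} (A : G.Arc (ℓ + 1)) : A.reverse.tail = A.init.reverse := by
  ext i
  · show A.verts (Fin.succ i).rev = A.verts i.rev.castSucc
    rw [Fin.rev_succ]
  · show A.edges (Fin.succ i).rev = A.edges i.rev.castSucc
    rw [Fin.rev_succ]

/-- The reversal relation on arcs. -/
def LinkRel (G : Multigraph V E) {ℓ : ℕ} (A B : G.Arc ℓ) : Prop := B = A.reverse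

/-- An `ℓ`-link: an `ℓ`-arc up to reversal. -/
def Link (G : Multigraph V E) (ℓ : ℕ) : Type := Quot (G.LinkRel (ℓ := ℓ))

/-- The `ℓ`-link determined by an `ℓ`-arc. -/
def Link.mk {ℓ : ℕ} (A : G.Arc ℓ) : G.Link ℓ := Quot.mk (G.LinkRel) A

lemma Link.mk_reverse {ℓ : ℕ} (A : G.Arc ℓ) : (Link.mk A.reverse : G.Link ℓ) = Link.mk A :=
  (Quot.sound (show G.LinkRel A A.reverse from rfl)).symm

/-- The unordered pair of `ℓ`-links that are the two length-`ℓ` subsequences of an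
`(ℓ+1)`-link. -/
def linkEnds (G : Multigraph V E) {ℓ : ℕ} : G.Link (ℓ + 1) → Sym2 (G.Link ℓ) :=
  Quot.lift (fun A => s(Link.mk A.init, Link.mk A.tail)) (by
    rintro A B rfl
    show s(Link.mk A.init, Link.mk A.tail) = s(Link.mk A.reverse.init, Link.mk A.reverse.tail)
    rw [Arc.reverse_init, Arc.reverse_tail, Link.mk_reverse, Link.mk_reverse, Sym2.eq_swap])

/-- The `ℓ`-link graph of `G`: vertices are the `ℓ`-links, and for each
`(ℓ+1)`-link there is one edge joining its two length-`ℓ` subsequences. -/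
def linkGraph (G : Multigraph V E) (ℓ : ℕ) : Multigraph (G.Link ℓ) (G.Link (ℓ + 1)) where
  inc := G.linkEnds

/-- The set of edges used by an arc. -/
def Arc.edgeSet {ℓ : ℕ} (A : G.Arc ℓ) : Set E := Set.range A.edges

/-- The set of vertices used by an arc. -/
def Arc.vertSet {ℓ : ℕ} (A : G.Arc ℓ) : Set V := Set.range A.verts

lemma Arc.edgeSet_reverse {ℓ : ℕ} (A : G.Arc ℓ) : A.reverse.edgeSet = A.edgeSet := by
  ext e
  constructor
  · rintro ⟨i, rfl⟩; exact ⟨i.rev, rfl⟩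
  · rintro ⟨i, rfl⟩; exact ⟨i.rev, by show A.edges i.rev.rev = _; rw [Fin.rev_rev]⟩

lemma Arc.vertSet_reverse {ℓ : ℕ} (A : G.Arc ℓ) : A.reverse.vertSet = A.vertSet := by
  ext v
  constructor
  · rintro ⟨i, rfl⟩; exact ⟨i.rev, rfl⟩
  · rintro ⟨i, rfl⟩; exact ⟨i.rev, by show A.verts i.rev.rev = _; rw [Fin.rev_rev]⟩

/-- The set of edges used by a link. -/
def Link.edgeSet {ℓ : ℕ} : G.Link ℓ → Set E :=
  Quot.lift Arc.edgeSet (by rintro A B rfl; exact (Arc.edgeSet_reverse A).symm)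

/-- The set of vertices used by a link. -/
def Link.vertSet {ℓ : ℕ} : G.Link ℓ → Set V :=
  Quot.lift Arc.vertSet (by rintro A B rfl; exact (Arc.vertSet_reverse A).symm)

lemma Arc.tail_init_comm {ℓ : ℕ} (A : G.Arc (ℓ + 2)) : A.tail.init = A.init.tail := by
  ext i
  · show A.verts (Fin.castSucc i).succ = A.verts (Fin.succ i).castSucc
    rw [Fin.succ_castSucc]
  · show A.edges (Fin.castSucc i).succ = A.edges (Fin.succ i).castSucc
    rw [Fin.succ_castSucc]

/-- The middle `ℓ`-segment of an `(ℓ+2)`-arc, obtained by deleting the first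
and last edge. -/
def Arc.mid2 {ℓ : ℕ} (A : G.Arc (ℓ + 2)) : G.Arc ℓ := A.tail.init

lemma Arc.mid2_reverse {ℓ : ℕ} (A : G.Arc (ℓ + 2)) : A.reverse.mid2 = A.mid2.reverse := by
  show A.reverse.tail.init = A.tail.init.reverse
  rw [Arc.reverse_tail, Arc.reverse_init, Arc.tail_init_comm]

/-- The middle `ℓ`-segment of an `(ℓ+2)`-link. -/
def Link.mid2 {ℓ : ℕ} : G.Link (ℓ + 2) → G.Link ℓ :=
  Quot.lift (fun A => Link.mk A.mid2) (by
    rintro A B rfl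
    show Link.mk A.mid2 = Link.mk A.reverse.mid2
    rw [Arc.mid2_reverse, Link.mk_reverse])

/-- The middle unit of an arc: its middle vertex if its length is even, and its
middle edge if its length is odd. -/
def Arc.midUnit {ℓ : ℕ} (A : G.Arc ℓ) : V ⊕ E :=
  if h : Even ℓ then Sum.inl (A.verts ⟨ℓ / 2, by omega⟩)
  else Sum.inr (A.edges ⟨ℓ / 2, by
    have : ℓ % 2 = 1 := Nat.not_even_iff.mp h
    omega⟩)

lemma Arc.midUnit_reverse {ℓ : ℕ} (A : G.Arc ℓ) : A.reverse.midUnit = A.midUnit := by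
  by_cases h : Even ℓ
  · rw [Arc.midUnit, Arc.midUnit, dif_pos h, dif_pos h]
    have hk : ℓ % 2 = 0 := Nat.even_iff.mp h
    congr 1
    show A.verts (⟨ℓ / 2, _⟩ : Fin (ℓ + 1)).rev = A.verts _
    congr 1
    ext
    rw [Fin.val_rev]
    show ℓ + 1 - (ℓ / 2 + 1) = ℓ / 2
    omega
  · rw [Arc.midUnit, Arc.midUnit, dif_neg h, dif_neg h]
    have hk : ℓ % 2 = 1 := Nat.not_even_iff.mp h
    congr 1
    show A.edges (⟨ℓ / 2, _⟩ : Fin ℓ).rev = A.edges _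
    congr 1
    ext
    rw [Fin.val_rev]
    show ℓ - (ℓ / 2 + 1) = ℓ / 2
    omega

/-- The middle unit of a link: its middle vertex (even length) or middle edge
(odd length). -/
def Link.midUnit {ℓ : ℕ} : G.Link ℓ → V ⊕ E :=
  Quot.lift Arc.midUnit (by rintro A B rfl; exact (Arc.midUnit_reverse A).symm)

/-- `G` has a (nonnull) subgraph of minimum degree at least `d`. -/
def HasMinDegSubgraph (G : Multigraph V E) (d : ℕ) : Prop :=
  ∃ (V' : Set V) (E' : Set E), V'.Nonempty ∧ (∀ e ∈ E', ∀ v ∈ G.inc e, v ∈ V') ∧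
    ∀ v ∈ V', d ≤ Nat.card {e : E // e ∈ E' ∧ v ∈ G.inc e}

/-- The degeneracy of `G`: the maximum over subgraphs of the minimum degree. -/
noncomputable def degeneracy (G : Multigraph V E) : ℕ := sSup {d | G.HasMinDegSubgraph d}

/-- The edge-chromatic number of a multigraph: the least `t` such that the edges
can be `t`-coloured with edges sharing an endpoint getting distinct colours. -/
noncomputable def edgeChromaticNumber (G : Multigraph V E) : ℕ :=
  sInf {t | ∃ c : E → Fin t, ∀ e f : E, e ≠ f → (∃ v, v ∈ G.inc e ∧ v ∈ G.inc f) → c e ≠ c f}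

/-- The complete bipartite multigraph `K_{n,m}` (one edge for each pair). -/
def completeBipartiteMG (n m : ℕ) : Multigraph (Fin n ⊕ Fin m) (Fin n × Fin m) :=
  ⟨fun p => s(Sum.inl p.1, Sum.inr p.2)⟩

end Multigraph

/-- `H` contains a complete minor on `t` branch sets: `t` pairwise disjoint
nonempty connected subsets of vertices with an edge between every two of them. -/
def SimpleGraph.HasKMinor {W : Type} (H : SimpleGraph W) (t : ℕ) : Prop :=
  ∃ B : Fin t → Set W,
    (∀ i, (B i).Nonempty) ∧
    (∀ i, ((H.induce (B i)).Connected)) ∧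
    (∀ i j, i ≠ j → Disjoint (B i) (B j)) ∧
    (∀ i j, i ≠ j → ∃ u ∈ B i, ∃ v ∈ B j, H.Adj u v)

namespace Multigraph

variable {V E : Type} {G : Multigraph V E}

lemma Link.mk_eq_iff {ℓ : ℕ} {A B : G.Arc ℓ} :
    Link.mk A = Link.mk B ↔ A = B ∨ A = B.reverse := by
  constructor
  · intro h
    have h' := Quot.eqvGen_exact h
    clear h
    induction h' with
    | rel x y hxy => exact Or.inr (by rw [hxy, Arc.reverse_reverse])
    | refl x => exact Or.inl rfl
    | symm x y _ ih =>
      rcases ih with rfl | rfl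
      · exact Or.inl rfl
      · exact Or.inr (y.reverse_reverse).symm
    | trans x y z _ _ ih1 ih2 =>
      rcases ih1 with rfl | rfl
      · exact ih2
      · rcases ih2 with rfl | rfl
        · exact Or.inr rfl
        · exact Or.inl (Arc.reverse_reverse _)
  · rintro (rfl | rfl)
    · rfl
    · exact Link.mk_reverse B

lemma Arc.ext_of_init_tail {ℓ : ℕ} (hℓ : 1 ≤ ℓ) {A B : G.Arc (ℓ + 1)}
    (h1 : A.init = B.init) (h2 : A.tail = B.tail) : A = B := by
  have hv1 : ∀ j : Fin (ℓ + 1), A.verts j.castSucc = B.verts j.castSucc :=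
    fun j => congrFun (congrArg Arc.verts h1) j
  have hv2 : ∀ j : Fin (ℓ + 1), A.verts j.succ = B.verts j.succ :=
    fun j => congrFun (congrArg Arc.verts h2) j
  have he1 : ∀ j : Fin ℓ, A.edges j.castSucc = B.edges j.castSucc :=
    fun j => congrFun (congrArg Arc.edges h1) j
  have he2 : ∀ j : Fin ℓ, A.edges j.succ = B.edges j.succ :=
    fun j => congrFun (congrArg Arc.edges h2) j
  ext i
  · by_cases h : (i : ℕ) < ℓ + 1
    · have h3 := hv1 ⟨(i : ℕ), h⟩
      have hi : ((⟨(i : ℕ), h⟩ : Fin (ℓ + 1)).castSucc) = i := by ext; simp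
      rwa [hi] at h3
    · have hi2 : (i : ℕ) = ℓ + 1 := by omega
      have h3 := hv2 ⟨ℓ, by omega⟩
      have hi : ((⟨ℓ, by omega⟩ : Fin (ℓ + 1)).succ) = i := by ext; simp; omega
      rwa [hi] at h3
  · by_cases h : (i : ℕ) < ℓ
    · have h3 := he1 ⟨(i : ℕ), h⟩
      have hi : ((⟨(i : ℕ), h⟩ : Fin ℓ).castSucc) = i := by ext; simp
      rwa [hi] at h3
    · have hi2 : (i : ℕ) = ℓ := by omega
      have h3 := he2 ⟨ℓ - 1, by omega⟩
      have hi : ((⟨ℓ - 1, by omega⟩ : Fin ℓ).succ) = i := by ext; simp; omega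
      rwa [hi] at h3

lemma Arc.caseX {ℓ : ℕ} (hs : G.Simple) (hℓ : 1 ≤ ℓ) {A B : G.Arc (ℓ + 1)}
    (h1 : A.init = B.init) (h2 : A.tail = B.tail.reverse) : False := by
  have hv1 : ∀ j : Fin (ℓ + 1), A.verts j.castSucc = B.verts j.castSucc :=
    fun j => congrFun (congrArg Arc.verts h1) j
  have he1 : ∀ j : Fin ℓ, A.edges j.castSucc = B.edges j.castSucc :=
    fun j => congrFun (congrArg Arc.edges h1) j
  have hv2 : ∀ j : Fin (ℓ + 1), A.verts j.succ = B.verts j.rev.succ :=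
    fun j => congrFun (congrArg Arc.verts h2) j
  have he2 : ∀ j : Fin ℓ, A.edges j.succ = B.edges j.rev.succ :=
    fun j => congrFun (congrArg Arc.edges h2) j
  rcases Nat.even_or_odd ℓ with ⟨k, hk⟩ | ⟨k, hk⟩
  · have hkl : k < ℓ := by omega
    have h3 := he2 ⟨k, hkl⟩
    have h4 := he1 ⟨k, hkl⟩
    have hidx : ((⟨k, hkl⟩ : Fin ℓ).rev.succ) = (⟨k, hkl⟩ : Fin ℓ).castSucc := by
      ext; simp [Fin.val_rev]; omega
    rw [hidx, ← h4] at h3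
    exact A.nb (⟨k, hkl⟩ : Fin ℓ).castSucc (⟨k, hkl⟩ : Fin ℓ).succ (by simp) h3.symm
  · have hkl : k + 1 < ℓ + 1 := by omega
    have h3 := hv2 ⟨k + 1, hkl⟩
    have h4 := hv1 ⟨k + 1, hkl⟩
    have hidx : ((⟨k + 1, hkl⟩ : Fin (ℓ + 1)).rev.succ) = (⟨k + 1, hkl⟩ : Fin (ℓ + 1)).castSucc := by
      ext; simp [Fin.val_rev]; omega
    rw [hidx, ← h4] at h3
    apply hs.1 (A.edges ⟨k + 1, hkl⟩)
    rw [A.inc_eq ⟨k + 1, hkl⟩, h3]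
    exact Sym2.mk_isDiag_iff.mpr rfl

lemma Arc.case4 {ℓ : ℕ} (hs : G.Simple) (hℓ : 1 ≤ ℓ) {A B : G.Arc (ℓ + 1)}
    (h1 : A.init = B.init.reverse) (h2 : A.tail = B.tail.reverse) : False := by
  have hv1 : ∀ j : Fin (ℓ + 1), A.verts j.castSucc = B.verts j.rev.castSucc :=
    fun j => congrFun (congrArg Arc.verts h1) j
  have hv2 : ∀ j : Fin (ℓ + 1), A.verts j.succ = B.verts j.rev.succ :=
    fun j => congrFun (congrArg Arc.verts h2) j
  have e1 := hv1 ⟨ℓ, by omega⟩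
  have e2 := hv2 ⟨ℓ - 1, by omega⟩
  have hi1 : ((⟨ℓ, by omega⟩ : Fin (ℓ + 1)).rev.castSucc) = ((0 : Fin (ℓ + 1)).castSucc) := by
    ext; simp [Fin.val_rev]
  have hi2 : ((⟨ℓ - 1, by omega⟩ : Fin (ℓ + 1)).rev.succ) = (⟨2, by omega⟩ : Fin (ℓ + 2)) := by
    ext; simp [Fin.val_rev]; omega
  have hi3 : ((⟨ℓ, by omega⟩ : Fin (ℓ + 1)).castSucc) = ((⟨ℓ - 1, by omega⟩ : Fin (ℓ + 1)).succ) := by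
    ext; simp; omega
  rw [hi1] at e1
  rw [hi2] at e2
  rw [hi3] at e1
  -- e1 : A.verts ⟨ℓ⟩ = B.verts 0 ; e2 : A.verts ⟨ℓ⟩ = B.verts ⟨2⟩
  have hb : B.verts ((0 : Fin (ℓ + 1)).castSucc) = B.verts (⟨2, by omega⟩ : Fin (ℓ + 2)) :=
    e1.symm.trans e2
  have h1lt : (1 : ℕ) < ℓ + 1 := by omega
  have q0 := B.inc_eq (0 : Fin (ℓ + 1))
  have q1 := B.inc_eq (⟨1, h1lt⟩ : Fin (ℓ + 1))
  have hi4 : ((⟨1, h1lt⟩ : Fin (ℓ + 1)).succ) = (⟨2, by omega⟩ : Fin (ℓ + 2)) := by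
    ext; simp
  have hi5 : ((⟨1, h1lt⟩ : Fin (ℓ + 1)).castSucc) = ((0 : Fin (ℓ + 1)).succ) := by
    ext; simp
  rw [hi4, ← hb, hi5] at q1
  have heq : G.inc (B.edges (0 : Fin (ℓ + 1))) = G.inc (B.edges (⟨1, h1lt⟩ : Fin (ℓ + 1))) := by
    rw [q0, q1, Sym2.eq_swap]
  exact B.nb (0 : Fin (ℓ + 1)) (⟨1, h1lt⟩ : Fin (ℓ + 1)) (by simp) (hs.2 heq)

lemma Link.mk_eq_of_ends {ℓ : ℕ} (hs : G.Simple) (hℓ : 1 ≤ ℓ) {A B : G.Arc (ℓ + 1)}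
    (h1 : Link.mk A.init = Link.mk B.init) (h2 : Link.mk A.tail = Link.mk B.tail) :
    Link.mk A = Link.mk B := by
  rcases Link.mk_eq_iff.mp h1 with h1 | h1 <;> rcases Link.mk_eq_iff.mp h2 with h2 | h2
  · exact congrArg Link.mk (Arc.ext_of_init_tail hℓ h1 h2)
  · exact (Arc.caseX hs hℓ h1 h2).elim
  · refine (Arc.caseX hs hℓ (A := A.reverse) (B := B.reverse) ?_ ?_).elim
    · rw [Arc.reverse_init, Arc.reverse_init, h2]
    · rw [Arc.reverse_tail, Arc.reverse_tail, h1]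
  · exact (Arc.case4 hs hℓ h1 h2).elim

lemma Arc.mk_init_ne_mk_tail {ℓ : ℕ} (hs : G.Simple) (hℓ : 1 ≤ ℓ) (A : G.Arc (ℓ + 1)) :
    Link.mk A.init ≠ Link.mk A.tail := by
  intro h
  rcases Link.mk_eq_iff.mp h with h | h
  · have hv : ∀ j : Fin (ℓ + 1), A.verts j.castSucc = A.verts j.succ :=
      fun j => congrFun (congrArg Arc.verts h) j
    apply hs.1 (A.edges (0 : Fin (ℓ + 1)))
    rw [A.inc_eq (0 : Fin (ℓ + 1))]
    exact Sym2.mk_isDiag_iff.mpr (hv (0 : Fin (ℓ + 1)))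
  · have hv : ∀ j : Fin (ℓ + 1), A.verts j.castSucc = A.verts j.rev.succ :=
      fun j => congrFun (congrArg Arc.verts h) j
    have he : ∀ j : Fin ℓ, A.edges j.castSucc = A.edges j.rev.succ :=
      fun j => congrFun (congrArg Arc.edges h) j
    rcases Nat.even_or_odd ℓ with ⟨k, hk⟩ | ⟨k, hk⟩
    · have hkl : k < ℓ + 1 := by omega
      have h3 := hv ⟨k, hkl⟩
      have hidx : ((⟨k, hkl⟩ : Fin (ℓ + 1)).rev.succ) = (⟨k, hkl⟩ : Fin (ℓ + 1)).succ := by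
        ext; simp [Fin.val_rev]; omega
      rw [hidx] at h3
      apply hs.1 (A.edges ⟨k, hkl⟩)
      rw [A.inc_eq ⟨k, hkl⟩, h3]
      exact Sym2.mk_isDiag_iff.mpr rfl
    · have hkl : k < ℓ := by omega
      have h3 := he ⟨k, hkl⟩
      have hidx : ((⟨k, hkl⟩ : Fin ℓ).rev.succ) = (⟨k, hkl⟩ : Fin ℓ).succ := by
        ext; simp [Fin.val_rev]; omega
      rw [hidx] at h3
      exact A.nb (⟨k, hkl⟩ : Fin ℓ).castSucc (⟨k, hkl⟩ : Fin ℓ).succ (by simp) h3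

end Multigraph


/-- In a finite simple graph, at most one `(ℓ+1)`-link has a given pair
of `ℓ`-links as its two length-`ℓ` subsequences; hence the `ℓ`-link graph of a
simple graph is simple. -/
theorem linkGraph_simple {V E : Type} (G : Multigraph V E) (hs : G.Simple)
    (ℓ : ℕ) (hℓ : 1 ≤ ℓ) (L₀ L₁ : G.Link ℓ) (Q Q' : G.Link (ℓ + 1))
    (hQ : G.linkEnds Q = s(L₀, L₁)) (hQ' : G.linkEnds Q' = s(L₀, L₁)) :
    Q = Q' ∧ (G.linkGraph ℓ).Simple := by
  have key : ∀ A B : G.Arc (ℓ + 1),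
      G.linkEnds (Multigraph.Link.mk A) = G.linkEnds (Multigraph.Link.mk B) →
      Multigraph.Link.mk A = Multigraph.Link.mk B := by
    intro A B h
    have h' : s(Multigraph.Link.mk A.init, Multigraph.Link.mk A.tail) =
        s(Multigraph.Link.mk B.init, Multigraph.Link.mk B.tail) := h
    rcases Sym2.eq_iff.mp h' with ⟨ha, hb⟩ | ⟨ha, hb⟩
    · exact Multigraph.Link.mk_eq_of_ends hs hℓ ha hb
    · have ha' : Multigraph.Link.mk A.init = Multigraph.Link.mk B.reverse.init := by
        rw [Multigraph.Arc.reverse_init, Multigraph.Link.mk_reverse]; exact ha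
      have hb' : Multigraph.Link.mk A.tail = Multigraph.Link.mk B.reverse.tail := by
        rw [Multigraph.Arc.reverse_tail, Multigraph.Link.mk_reverse]; exact hb
      rw [← Multigraph.Link.mk_reverse B]
      exact Multigraph.Link.mk_eq_of_ends hs hℓ ha' hb'
  have hinj : Function.Injective (G.linkEnds (ℓ := ℓ)) := by
    intro q q'
    refine Quot.ind (β := fun q => G.linkEnds q = G.linkEnds q' → q = q')
      (fun A => ?_) q
    refine Quot.ind (β := fun q' => G.linkEnds (Multigraph.Link.mk A) = G.linkEnds q' →
      Multigraph.Link.mk A = q') (fun B => key A B) q'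
  refine ⟨hinj (hQ.trans hQ'.symm), ?_, hinj⟩
  intro q
  refine Quot.ind (β := fun q => ¬ ((G.linkGraph ℓ).inc q).IsDiag) (fun A => ?_) q
  intro hd
  have hd' : Multigraph.Link.mk A.init = Multigraph.Link.mk A.tail := Sym2.mk_isDiag_iff.mp hd
  exact Multigraph.Arc.mk_init_ne_mk_tail hs hℓ A hd'
end

section
/- Let G be a finite loopless multigraph, ℓ ≥ 1, and suppose two distinct (ℓ+1)-links Q, Q′ of G both have the same pair (L₀, L₁) of length-ℓ subsequences. Then G contains a pair of parallel edges e₀, e₁ between two vertices v₀, v₁, and L₀, L₁, Q, Q′ are all walks alternating along only the edges e₀ and e₁. -/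
namespace Multigraph

variable {V E : Type} {G : Multigraph V E}

lemma verts_congr' {ℓ : ℕ} (A : G.Arc ℓ) {i j : Fin (ℓ + 1)} (h : (i : ℕ) = (j : ℕ)) :
    A.verts i = A.verts j := by rw [Fin.ext h]

lemma edges_congr' {ℓ : ℕ} (A : G.Arc ℓ) {i j : Fin ℓ} (h : (i : ℕ) = (j : ℕ)) :
    A.edges i = A.edges j := by rw [Fin.ext h]

lemma mk_eq_cases {ℓ : ℕ} {A B : G.Arc ℓ} (h : Link.mk A = Link.mk B) :
    B = A ∨ B = A.reverse := by
  have resp : ∀ C D : G.Arc ℓ, G.LinkRel C D →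
      (C = A ∨ C = A.reverse) = (D = A ∨ D = A.reverse) := by
    rintro C D rfl
    apply propext
    constructor
    · rintro (rfl | rfl)
      · exact Or.inr rfl
      · exact Or.inl A.reverse_reverse
    · rintro (hD | hD)
      · right; rw [← hD, Arc.reverse_reverse]
      · left
        have := congrArg Arc.reverse hD
        rwa [Arc.reverse_reverse, Arc.reverse_reverse] at this
  have hfa : Quot.lift (fun C => C = A ∨ C = A.reverse) resp (Link.mk A) := Or.inl rfl
  rw [h] at hfa
  exact hfa

lemma arc_eq_of_init_tail {ℓ : ℕ} (hℓ : 1 ≤ ℓ) {A B : G.Arc (ℓ + 1)}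
    (h1 : B.init = A.init) (h2 : B.tail = A.tail) : B = A := by
  have hv1 : ∀ k : Fin (ℓ + 1), B.verts k.castSucc = A.verts k.castSucc :=
    fun k => congrFun (congrArg Arc.verts h1) k
  have hv2 : ∀ k : Fin (ℓ + 1), B.verts k.succ = A.verts k.succ :=
    fun k => congrFun (congrArg Arc.verts h2) k
  have he1 : ∀ k : Fin ℓ, B.edges k.castSucc = A.edges k.castSucc :=
    fun k => congrFun (congrArg Arc.edges h1) k
  have he2 : ∀ k : Fin ℓ, B.edges k.succ = A.edges k.succ :=
    fun k => congrFun (congrArg Arc.edges h2) k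
  ext i
  · rcases Nat.eq_zero_or_pos i.val with h | h
    · calc B.verts i = B.verts (Fin.castSucc ⟨0, by omega⟩) := verts_congr' B (by simp [h])
        _ = A.verts (Fin.castSucc ⟨0, by omega⟩) := hv1 _
        _ = A.verts i := verts_congr' A (by simp [h])
    · have hlt : i.val - 1 < ℓ + 1 := by have := i.isLt; omega
      calc B.verts i = B.verts (Fin.succ ⟨i.val - 1, hlt⟩) := verts_congr' B (by simp; omega)
        _ = A.verts (Fin.succ ⟨i.val - 1, hlt⟩) := hv2 _
        _ = A.verts i := verts_congr' A (by simp; omega)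
  · rcases Nat.eq_zero_or_pos i.val with h | h
    · calc B.edges i = B.edges (Fin.castSucc ⟨0, by omega⟩) := edges_congr' B (by simp [h])
        _ = A.edges (Fin.castSucc ⟨0, by omega⟩) := he1 _
        _ = A.edges i := edges_congr' A (by simp [h])
    · have hlt : i.val - 1 < ℓ := by have := i.isLt; omega
      calc B.edges i = B.edges (Fin.succ ⟨i.val - 1, hlt⟩) := edges_congr' B (by simp; omega)
        _ = A.edges (Fin.succ ⟨i.val - 1, hlt⟩) := he2 _
        _ = A.edges i := edges_congr' A (by simp; omega)

lemma no_half_flip {ℓ : ℕ} (hG : G.Loopless) (hℓ : 1 ≤ ℓ) (A B : G.Arc (ℓ + 1))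
    (h1 : B.init = A.init) (h2 : B.tail = A.tail.reverse) : False := by
  -- pointwise consequences
  have hv1 : ∀ k : Fin (ℓ + 1), B.verts k.castSucc = A.verts k.castSucc :=
    fun k => congrFun (congrArg Arc.verts h1) k
  have hv2 : ∀ k : Fin (ℓ + 1), B.verts k.succ = A.verts k.rev.succ :=
    fun k => congrFun (congrArg Arc.verts h2) k
  have he1 : ∀ k : Fin ℓ, B.edges k.castSucc = A.edges k.castSucc :=
    fun k => congrFun (congrArg Arc.edges h1) k
  have he2 : ∀ k : Fin ℓ, B.edges k.succ = A.edges k.rev.succ :=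
    fun k => congrFun (congrArg Arc.edges h2) k
  -- palindromic relations on A
  have hv : ∀ j (hj1 : 1 ≤ j) (hj2 : j ≤ ℓ),
      A.verts ⟨j, by omega⟩ = A.verts ⟨ℓ + 2 - j, by omega⟩ := by
    intro j hj1 hj2
    calc A.verts ⟨j, by omega⟩
        = A.verts (Fin.castSucc ⟨j, by omega⟩) := verts_congr' A (by simp)
      _ = B.verts (Fin.castSucc ⟨j, by omega⟩) := (hv1 _).symm
      _ = B.verts (Fin.succ ⟨j - 1, by omega⟩) := verts_congr' B (by simp; omega)
      _ = A.verts (Fin.succ (Fin.rev ⟨j - 1, by omega⟩)) := hv2 _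
      _ = A.verts ⟨ℓ + 2 - j, by omega⟩ := verts_congr' A (by simp [Fin.val_rev]; omega)
  have he : ∀ j (hj1 : 1 ≤ j) (hj2 : j ≤ ℓ - 1),
      A.edges ⟨j, by omega⟩ = A.edges ⟨ℓ + 1 - j, by omega⟩ := by
    intro j hj1 hj2
    calc A.edges ⟨j, by omega⟩
        = A.edges (Fin.castSucc ⟨j, by omega⟩) := edges_congr' A (by simp)
      _ = B.edges (Fin.castSucc ⟨j, by omega⟩) := (he1 _).symm
      _ = B.edges (Fin.succ ⟨j - 1, by omega⟩) := edges_congr' B (by simp; omega)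
      _ = A.edges (Fin.succ (Fin.rev ⟨j - 1, by omega⟩)) := he2 _
      _ = A.edges ⟨ℓ + 1 - j, by omega⟩ := edges_congr' A (by simp [Fin.val_rev]; omega)
  rcases Nat.even_or_odd ℓ with ⟨m, hm⟩ | ⟨m, hm⟩
  · -- ℓ = 2m with m ≥ 1 : edges m and m+1 coincide, contradicting nb
    have hm1 : 1 ≤ m := by omega
    have key := he m hm1 (by omega)
    exact A.nb ⟨m, by omega⟩ ⟨m + 1, by omega⟩ rfl
      (key.trans (edges_congr' A (by simp; omega)))
  · -- ℓ = 2m+1 : vertices m+1 and m+2 coincide, giving a loop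
    have key := hv (m + 1) (by omega) (by omega)
    apply hG (A.edges ⟨m + 1, by omega⟩)
    rw [A.inc_eq ⟨m + 1, by omega⟩]
    rw [Sym2.mk_isDiag_iff]
    calc A.verts (Fin.castSucc ⟨m + 1, by omega⟩)
        = A.verts ⟨m + 1, by omega⟩ := verts_congr' A (by simp)
      _ = A.verts ⟨ℓ + 2 - (m + 1), by omega⟩ := key
      _ = A.verts (Fin.succ ⟨m + 1, by omega⟩) := verts_congr' A (by simp; omega)

end Multigraph

/-- If two distinct `(ℓ+1)`-links of a loopless multigraph have the same
pair of length-`ℓ` subsequences `L₀, L₁`, then `G` has two parallel edges `e₀, e₁`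
and `L₀, L₁, Q, Q'` all alternate along only the edges `e₀` and `e₁`. -/
theorem parallel_of_two_common_links {V E : Type} (G : Multigraph V E) (hG : G.Loopless)
    (ℓ : ℕ) (hℓ : 1 ≤ ℓ) (L₀ L₁ : G.Link ℓ) (Q Q' : G.Link (ℓ + 1)) (hne : Q ≠ Q')
    (hQ : G.linkEnds Q = s(L₀, L₁)) (hQ' : G.linkEnds Q' = s(L₀, L₁)) :
    ∃ (v₀ v₁ : V) (e₀ e₁ : E), e₀ ≠ e₁ ∧ v₀ ≠ v₁ ∧
      G.inc e₀ = s(v₀, v₁) ∧ G.inc e₁ = s(v₀, v₁) ∧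
      L₀.edgeSet ⊆ {e₀, e₁} ∧ L₁.edgeSet ⊆ {e₀, e₁} ∧
      Q.edgeSet ⊆ {e₀, e₁} ∧ Q'.edgeSet ⊆ {e₀, e₁} := by
  classical
  open Multigraph in
  obtain ⟨A, rfl⟩ := Quot.exists_rep Q
  obtain ⟨B₀, rfl⟩ := Quot.exists_rep Q'
  have hQ2 : s(Link.mk A.init, Link.mk A.tail) = s(L₀, L₁) := hQ
  have hQ2' : s(Link.mk B₀.init, Link.mk B₀.tail) = s(L₀, L₁) := hQ'
  have hQQ : s(Link.mk A.init, Link.mk A.tail) = s(Link.mk B₀.init, Link.mk B₀.tail) :=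
    hQ2.trans hQ2'.symm
  obtain ⟨B, hBQ, hi, ht⟩ : ∃ B : G.Arc (ℓ + 1), Link.mk B = Link.mk B₀ ∧
      Link.mk A.init = Link.mk B.init ∧ Link.mk A.tail = Link.mk B.tail := by
    rcases Sym2.eq_iff.mp hQQ with ⟨h1, h2⟩ | ⟨h1, h2⟩
    · exact ⟨B₀, rfl, h1, h2⟩
    · refine ⟨B₀.reverse, Link.mk_reverse B₀, ?_, ?_⟩
      · rw [B₀.reverse_init, Link.mk_reverse]; exact h1
      · rw [B₀.reverse_tail, Link.mk_reverse]; exact h2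
  have hne' : Link.mk A ≠ Link.mk B := by
    rw [hBQ]; exact hne
  rcases mk_eq_cases hi with hii | hii <;> rcases mk_eq_cases ht with htt | htt
  · exact absurd (congrArg Link.mk (arc_eq_of_init_tail hℓ hii htt)).symm hne'
  · exact (no_half_flip hG hℓ A B hii htt).elim
  · refine (no_half_flip hG hℓ A.reverse B.reverse ?_ ?_).elim
    · rw [Arc.reverse_init, Arc.reverse_init, htt]
    · rw [Arc.reverse_tail, Arc.reverse_tail, hii, Arc.reverse_reverse]
  · -- the genuine case: B traverses A backwards shifted by two
    have hv1 : ∀ k : Fin (ℓ + 1), B.verts k.castSucc = A.verts k.rev.castSucc :=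
      fun k => congrFun (congrArg Multigraph.Arc.verts hii) k
    have hv2 : ∀ k : Fin (ℓ + 1), B.verts k.succ = A.verts k.rev.succ :=
      fun k => congrFun (congrArg Multigraph.Arc.verts htt) k
    have he1 : ∀ k : Fin ℓ, B.edges k.castSucc = A.edges k.rev.castSucc :=
      fun k => congrFun (congrArg Multigraph.Arc.edges hii) k
    have he2 : ∀ k : Fin ℓ, B.edges k.succ = A.edges k.rev.succ :=
      fun k => congrFun (congrArg Multigraph.Arc.edges htt) k
    -- step-two periodicity of A
    have hvstep : ∀ n (hn : n + 1 ≤ ℓ), A.verts ⟨n, by omega⟩ = A.verts ⟨n + 2, by omega⟩ := by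
      intro n hn
      calc A.verts ⟨n, by omega⟩
          = A.verts (Fin.castSucc (Fin.rev (⟨ℓ - n, by omega⟩ : Fin (ℓ + 1)))) :=
            verts_congr' A (by simp [Fin.val_rev]; omega)
        _ = B.verts (Fin.castSucc ⟨ℓ - n, by omega⟩) := (hv1 _).symm
        _ = B.verts (Fin.succ ⟨ℓ - n - 1, by omega⟩) := verts_congr' B (by simp; omega)
        _ = A.verts (Fin.succ (Fin.rev ⟨ℓ - n - 1, by omega⟩)) := hv2 _
        _ = A.verts ⟨n + 2, by omega⟩ := verts_congr' A (by simp [Fin.val_rev]; omega)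
    have hestep : ∀ n (hn : n + 2 ≤ ℓ), A.edges ⟨n, by omega⟩ = A.edges ⟨n + 2, by omega⟩ := by
      intro n hn
      calc A.edges ⟨n, by omega⟩
          = A.edges (Fin.castSucc (Fin.rev (⟨ℓ - 1 - n, by omega⟩ : Fin ℓ))) :=
            edges_congr' A (by simp [Fin.val_rev]; omega)
        _ = B.edges (Fin.castSucc ⟨ℓ - 1 - n, by omega⟩) := (he1 _).symm
        _ = B.edges (Fin.succ ⟨ℓ - 1 - n - 1, by omega⟩) := edges_congr' B (by simp; omega)
        _ = A.edges (Fin.succ (Fin.rev ⟨ℓ - 1 - n - 1, by omega⟩)) := he2 _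
        _ = A.edges ⟨n + 2, by omega⟩ := edges_congr' A (by simp [Fin.val_rev]; omega)
    have hvper : ∀ n (hn : n < ℓ + 2), A.verts ⟨n, hn⟩ = A.verts ⟨n % 2, by omega⟩ := by
      intro n
      induction n using Nat.strong_induction_on with
      | _ n ih =>
        intro hn
        rcases Nat.lt_or_ge n 2 with h2 | h2
        · exact verts_congr' A (by simp [Nat.mod_eq_of_lt h2])
        · calc A.verts ⟨n, hn⟩ = A.verts ⟨n - 2, by omega⟩ :=
              ((hvstep (n - 2) (by omega)).trans (verts_congr' A (by simp; omega))).symm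
            _ = A.verts ⟨(n - 2) % 2, by omega⟩ := ih (n - 2) (by omega) (by omega)
            _ = A.verts ⟨n % 2, by omega⟩ := verts_congr' A (by simp; omega)
    have heper : ∀ n (hn : n < ℓ + 1), A.edges ⟨n, hn⟩ = A.edges ⟨n % 2, by omega⟩ := by
      intro n
      induction n using Nat.strong_induction_on with
      | _ n ih =>
        intro hn
        rcases Nat.lt_or_ge n 2 with h2 | h2
        · exact edges_congr' A (by simp [Nat.mod_eq_of_lt h2])
        · calc A.edges ⟨n, hn⟩ = A.edges ⟨n - 2, by omega⟩ :=
              ((hestep (n - 2) (by omega)).trans (edges_congr' A (by simp; omega))).symm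
            _ = A.edges ⟨(n - 2) % 2, by omega⟩ := ih (n - 2) (by omega) (by omega)
            _ = A.edges ⟨n % 2, by omega⟩ := edges_congr' A (by simp; omega)
    set v₀ := A.verts ⟨0, by omega⟩ with hv₀
    set v₁ := A.verts ⟨1, by omega⟩ with hv₁
    set e₀ := A.edges ⟨0, by omega⟩ with he₀
    set e₁ := A.edges ⟨1, by omega⟩ with he₁
    have hinc0 : G.inc e₀ = s(v₀, v₁) := by
      rw [he₀, A.inc_eq ⟨0, by omega⟩]
      rw [show A.verts (Fin.castSucc ⟨0, by omega⟩) = v₀ from verts_congr' A (by simp)]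
      rw [show A.verts (Fin.succ ⟨0, by omega⟩) = v₁ from verts_congr' A (by simp)]
    have hinc1 : G.inc e₁ = s(v₀, v₁) := by
      rw [he₁, A.inc_eq ⟨1, by omega⟩]
      rw [show A.verts (Fin.castSucc ⟨1, by omega⟩) = v₁ from verts_congr' A (by simp)]
      rw [show A.verts (Fin.succ ⟨1, by omega⟩) = v₀ from
        (verts_congr' A (by simp) : A.verts (Fin.succ ⟨1, by omega⟩) = A.verts ⟨2, by omega⟩).trans
          ((hvper 2 (by omega)).trans (verts_congr' A (by simp)))]
      exact Sym2.eq_swap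
    have hAsub : ∀ i : Fin (ℓ + 1), A.edges i = e₀ ∨ A.edges i = e₁ := by
      intro i
      have h1 : A.edges i = A.edges ⟨i.val % 2, by omega⟩ :=
        (edges_congr' A (by simp) :
          A.edges i = A.edges ⟨i.val, i.isLt⟩).trans (heper i.val i.isLt)
      rcases Nat.mod_two_eq_zero_or_one i.val with h | h
      · left; rw [h1, he₀]; exact edges_congr' A (by simp [h])
      · right; rw [h1, he₁]; exact edges_congr' A (by simp [h])
    have hBA : ∀ j : Fin (ℓ + 1), ∃ i : Fin (ℓ + 1), B.edges j = A.edges i := by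
      intro j
      rcases Nat.lt_or_ge j.val ℓ with h | h
      · refine ⟨(Fin.rev (⟨j.val, h⟩ : Fin ℓ)).castSucc, ?_⟩
        calc B.edges j = B.edges (Fin.castSucc ⟨j.val, h⟩) := edges_congr' B (by simp)
          _ = _ := he1 _
      · -- j.val = ℓ ≥ 1
        have hj : j.val = ℓ := by have := j.isLt; omega
        refine ⟨(Fin.rev (⟨j.val - 1, by omega⟩ : Fin ℓ)).succ, ?_⟩
        calc B.edges j = B.edges (Fin.succ ⟨j.val - 1, by omega⟩) :=
              edges_congr' B (by simp; omega)
          _ = _ := he2 _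
    have hBsub : ∀ j : Fin (ℓ + 1), B.edges j = e₀ ∨ B.edges j = e₁ := by
      intro j
      obtain ⟨i, hji⟩ := hBA j
      rw [hji]; exact hAsub i
    refine ⟨v₀, v₁, e₀, e₁, A.nb ⟨0, by omega⟩ ⟨1, by omega⟩ rfl, ?_, hinc0, hinc1,
      ?_, ?_, ?_, ?_⟩
    · -- v₀ ≠ v₁
      intro h
      exact hG e₀ (by rw [hinc0, Sym2.mk_isDiag_iff]; exact h)
    · -- L₀
      have hL : L₀ = Link.mk A.init ∨ L₀ = Link.mk A.tail := by
        rcases Sym2.eq_iff.mp hQ2 with ⟨h1, h2⟩ | ⟨h1, h2⟩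
        · exact Or.inl h1.symm
        · exact Or.inr h2.symm
      rcases hL with rfl | rfl
      · rintro e ⟨k, rfl⟩
        rw [show A.init.edges k = A.edges k.castSucc from rfl]
        rcases hAsub (Fin.castSucc k) with h | h <;> simp [h]
      · rintro e ⟨k, rfl⟩
        rw [show A.tail.edges k = A.edges k.succ from rfl]
        rcases hAsub (Fin.succ k) with h | h <;> simp [h]
    · -- L₁
      have hL : L₁ = Link.mk A.init ∨ L₁ = Link.mk A.tail := by
        rcases Sym2.eq_iff.mp hQ2 with ⟨h1, h2⟩ | ⟨h1, h2⟩
        · exact Or.inr h2.symm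
        · exact Or.inl h1.symm
      rcases hL with rfl | rfl
      · rintro e ⟨k, rfl⟩
        rw [show A.init.edges k = A.edges k.castSucc from rfl]
        rcases hAsub (Fin.castSucc k) with h | h <;> simp [h]
      · rintro e ⟨k, rfl⟩
        rw [show A.tail.edges k = A.edges k.succ from rfl]
        rcases hAsub (Fin.succ k) with h | h <;> simp [h]
    · -- Q
      rintro e ⟨i, rfl⟩
      rcases hAsub i with h | h <;> simp [h]
    · -- Q'
      have hset : Multigraph.Link.edgeSet (Link.mk B₀) = B.edgeSet :=
        (congrArg Multigraph.Link.edgeSet hBQ).symm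
      show Multigraph.Link.edgeSet (Link.mk B₀) ⊆ _
      rw [hset]
      rintro e ⟨j, rfl⟩
      rcases hBsub j with h | h <;> simp [h]
end

section
/- Let G be a finite loopless multigraph and ℓ ≥ 2. Then the chromatic number of the ℓ-link graph satisfies χ(L_ℓ(G)) ≤ χ(L_{ℓ−2}(G)). -/
namespace Multigraph
variable {V E : Type} {G : Multigraph V E}

lemma verts_B {m : ℕ} (A : G.Arc (m + 3)) (i : Fin (m+1)) :
    A.init.mid2.verts i = A.verts ⟨(i : ℕ)+1, by omega⟩ := by
  show A.verts i.castSucc.succ.castSucc = _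
  congr 1

lemma verts_C {m : ℕ} (A : G.Arc (m + 3)) (i : Fin (m+1)) :
    A.tail.mid2.verts i = A.verts ⟨(i : ℕ)+2, by omega⟩ := by
  show A.verts i.castSucc.succ.succ = _
  congr 1

lemma edges_B {m : ℕ} (A : G.Arc (m + 3)) (i : Fin m) :
    A.init.mid2.edges i = A.edges ⟨(i : ℕ)+1, by omega⟩ := by
  show A.edges i.castSucc.succ.castSucc = _
  congr 1

lemma edges_C {m : ℕ} (A : G.Arc (m + 3)) (i : Fin m) :
    A.tail.mid2.edges i = A.edges ⟨(i : ℕ)+2, by omega⟩ := by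
  show A.edges i.castSucc.succ.succ = _
  congr 1

lemma link_mid2_ne {m : ℕ} (hG : G.Loopless) (A : G.Arc (m + 3)) :
    (Link.mk A.init.mid2 : G.Link m) ≠ Link.mk A.tail.mid2 := by
  intro h
  have h2 : A.init.mid2.midUnit = A.tail.mid2.midUnit := congrArg Link.midUnit h
  by_cases hm : Even m
  · rw [Arc.midUnit, Arc.midUnit, dif_pos hm, dif_pos hm] at h2
    have h3 := Sum.inl.inj h2
    rw [verts_B, verts_C] at h3
    apply hG (A.edges ⟨m / 2 + 1, by omega⟩)
    rw [A.inc_eq, Sym2.mk_isDiag_iff]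
    have e1 : ((⟨m / 2 + 1, by omega⟩ : Fin (m + 3)).castSucc : Fin (m + 4))
        = ⟨m / 2 + 1, by omega⟩ := by ext; simp
    have e2 : ((⟨m / 2 + 1, by omega⟩ : Fin (m + 3)).succ : Fin (m + 4))
        = ⟨m / 2 + 2, by omega⟩ := by ext; simp
    rw [e1, e2]
    exact h3
  · rw [Arc.midUnit, Arc.midUnit, dif_neg hm, dif_neg hm] at h2
    have h3 := Sum.inr.inj h2
    rw [edges_B, edges_C] at h3
    exact A.nb ⟨m / 2 + 1, by omega⟩ ⟨m / 2 + 2, by omega⟩ rfl h3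

lemma Arc.mid2_init {m : ℕ} (A : G.Arc (m + 3)) : A.mid2.init = A.init.mid2 :=
  congrArg Arc.init (Arc.tail_init_comm A)

lemma Arc.mid2_tail {m : ℕ} (A : G.Arc (m + 3)) : A.mid2.tail = A.tail.mid2 :=
  (Arc.tail_init_comm A.tail).symm

lemma adj_mid2 {m : ℕ} (hG : G.Loopless) (A : G.Arc (m + 3)) :
    (G.linkGraph m).toSimple.Adj (Link.mk A.init.mid2) (Link.mk A.tail.mid2) := by
  refine ⟨link_mid2_ne hG A, Link.mk A.mid2, ?_⟩
  show s(Link.mk A.mid2.init, Link.mk A.mid2.tail) = _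
  rw [Arc.mid2_init, Arc.mid2_tail]

/-- The middle homomorphism. -/
def mid2Hom {m : ℕ} (hG : G.Loopless) :
    (G.linkGraph (m + 2)).toSimple →g (G.linkGraph m).toSimple where
  toFun := Link.mid2
  map_rel' := by
    rintro a b ⟨hne, e, he⟩
    induction e using Quot.ind with
    | _ A =>
      have he' : s(Link.mk A.init, Link.mk A.tail) = s(a, b) := he
      rw [Sym2.eq_iff] at he'
      rcases he' with ⟨h1, h2⟩ | ⟨h1, h2⟩
      · rw [← h1, ← h2]; exact adj_mid2 hG A
      · rw [← h1, ← h2]; exact (adj_mid2 hG A).symm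

end Multigraph

/-- For a finite loopless multigraph `G` and `ℓ ≥ 2`,
`χ(L_ℓ(G)) ≤ χ(L_{ℓ-2}(G))`. -/
theorem chromatic_linkGraph_mono {V E : Type} [Finite V] [Finite E] (G : Multigraph V E)
    (hG : G.Loopless) (ℓ : ℕ) (hℓ : 2 ≤ ℓ) :
    ((G.linkGraph ℓ).toSimple).chromaticNumber
      ≤ ((G.linkGraph (ℓ - 2)).toSimple).chromaticNumber := by
  obtain ⟨m, rfl⟩ : ∃ m, ℓ = m + 2 := ⟨ℓ - 2, by omega⟩
  exact SimpleGraph.chromaticNumber_le_of_forall_imp fun n ⟨C⟩ =>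
    ⟨C.comp (Multigraph.mid2Hom hG)⟩
end

section
/- Let G be a finite loopless multigraph with degeneracy at most 4 or at least 5, and let ℓ ≥ 2 be even. Assuming the truth of Hadwiger's conjecture for graphs of chromatic number at most 6 (Robertson–Seymour–Thomas) and the bound η(L_ℓ(G)) ≥ degeneracy(G), Hadwiger's conjecture holds for L_ℓ(G): η(L_ℓ(G)) ≥ χ(L_ℓ(G)). In particular, if d := degeneracy(G) ≥ 5 and ℓ ≥ 2 is even, then χ(L_ℓ(G)) ≤ (2/3)d + 5/3 ≤ d ≤ η(L_ℓ(G)). -/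
section AuxHadwiger



/-- The colour-combining function: `q` full triples, remainder `r`. -/
def phiAux (q r a b c : ℕ) : ℕ :=
  if a < 3 then a
  else if a < 3 + 3*q then
    (if ((3 ≤ b ∧ b < 3 + 3*q ∧ (b-3)/3 = (a-3)/3) ∧
         (3 ≤ c ∧ c < 3 + 3*q ∧ (c-3)/3 = (a-3)/3)) then (a-3) % 3
     else 3 + 2*((a-3)/3) +
       (if 3 ≤ b ∧ b < 3 + 3*q ∧ (b-3)/3 = (a-3)/3 then
          (if (a-3) % 3 < (b-3) % 3 then 0 else 1)
        else if 3 ≤ c ∧ c < 3 + 3*q ∧ (c-3)/3 = (a-3)/3 then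
          (if (a-3) % 3 < (c-3) % 3 then 0 else 1)
        else 0))
  else if r = 2 ∧ a = 3 + 3*q then 3 + 2*q
  else if 0 ≠ (if b < 3 then b else 3) ∧ 0 ≠ (if c < 3 then c else 3) then 0
  else if 1 ≠ (if b < 3 then b else 3) ∧ 1 ≠ (if c < 3 then c else 3) then 1
  else 2

set_option maxHeartbeats 4000000 in
lemma phiAux_symm (q r a b c : ℕ) : phiAux q r a b c = phiAux q r a c b := by
  unfold phiAux
  split_ifs <;> omega

set_option maxHeartbeats 4000000 in
lemma phiAux_lt (q r d a b c : ℕ) (hr : r < 3) (hd : d - 2 = 3*q + r) (h5 : 5 ≤ d)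
    (ha : a < d + 1) : phiAux q r a b c < (2*d+5)/3 := by
  unfold phiAux
  split_ifs <;> omega

set_option maxHeartbeats 16000000 in
lemma phiAux_conf (q r k a b cc dd : ℕ) (hk : k = 3 + 3*q + r) (hr : r < 3)
    (ha : a < k) (hcc : cc < k) (hab : a ≠ b) (hac : a ≠ cc) (hcd : cc ≠ dd) :
    phiAux q r a b cc ≠ phiAux q r cc a dd := by
  unfold phiAux
  split_ifs <;> omega

end AuxHadwiger

namespace Multigraph

variable {V E : Type}

lemma not_hasMinDeg [Finite V] [Finite E] (G : Multigraph V E) :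
    ¬ G.HasMinDegSubgraph (G.degeneracy + 1) := by
  intro h
  have hbdd : BddAbove {d | G.HasMinDegSubgraph d} := by
    refine ⟨Nat.card E, fun d hd => ?_⟩
    obtain ⟨V', E', ⟨v, hv⟩, _, hmin⟩ := hd
    refine le_trans (hmin v hv) ?_
    exact Nat.card_le_card_of_injective Subtype.val Subtype.val_injective
  have h2 : G.degeneracy + 1 ≤ G.degeneracy := le_csSup hbdd h
  omega

lemma exists_low_vertex [Finite V] [Finite E] (G : Multigraph V E) (s : Finset V)
    (hne : s.Nonempty) :
    ∃ v ∈ s, Nat.card {e : E // (∀ w ∈ G.inc e, w ∈ s) ∧ v ∈ G.inc e} ≤ G.degeneracy := by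
  by_contra h
  push_neg at h
  apply not_hasMinDeg G
  refine ⟨↑s, {e | ∀ w ∈ G.inc e, w ∈ s}, Finset.coe_nonempty.mpr hne, ?_, ?_⟩
  · intro e he w hw
    exact Finset.mem_coe.mpr (he w hw)
  · intro v hv
    have hv' : v ∈ s := Finset.mem_coe.mp hv
    exact h v hv'

lemma greedy_aux [Finite V] [Finite E] (G : Multigraph V E) (s : Finset V) :
    ∃ co : V → Fin (G.degeneracy + 1),
      ∀ u ∈ s, ∀ w ∈ s, G.toSimple.Adj u w → co u ≠ co w := by
  classical
  induction s using Finset.strongInduction with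
  | _ s ih =>
  rcases s.eq_empty_or_nonempty with rfl | hne
  · exact ⟨fun _ => ⟨0, Nat.succ_pos _⟩, by simp⟩
  obtain ⟨v, hv, hvdeg⟩ := exists_low_vertex G s hne
  obtain ⟨co, hco⟩ := ih (s.erase v) (Finset.erase_ssubset hv)
  set t : Finset V := (s.erase v).filter (fun u => G.toSimple.Adj v u) with ht
  have htcard : t.card ≤ G.degeneracy := by
    have hF : ∀ u : {u // u ∈ t}, ∃ e : E, G.inc e = s(v, u.1) := by
      rintro ⟨u, hu⟩
      exact ((Finset.mem_filter.mp hu).2).2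
    choose F hFspec using hF
    have hFmem : ∀ u : {u // u ∈ t},
        (∀ w ∈ G.inc (F u), w ∈ s) ∧ v ∈ G.inc (F u) := by
      rintro ⟨u, hu⟩
      have hu' : u ∈ s.erase v := (Finset.mem_filter.mp hu).1
      constructor
      · intro w hw
        rw [hFspec ⟨u, hu⟩] at hw
        rcases Sym2.mem_iff.mp hw with rfl | rfl
        · exact hv
        · exact Finset.mem_of_mem_erase hu'
      · rw [hFspec ⟨u, hu⟩]; exact Sym2.mem_mk_left v u
    have hInj : Function.Injective
        (fun u : {u // u ∈ t} =>
          (⟨F u, hFmem u⟩ : {e : E // (∀ w ∈ G.inc e, w ∈ s) ∧ v ∈ G.inc e})) := by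
      rintro ⟨u1, hu1⟩ ⟨u2, hu2⟩ hEq
      have hF12 : F ⟨u1, hu1⟩ = F ⟨u2, hu2⟩ := congrArg Subtype.val hEq
      have : s(v, u1) = s(v, u2) := by
        rw [← hFspec ⟨u1, hu1⟩, ← hFspec ⟨u2, hu2⟩, hF12]
      rcases Sym2.eq_iff.mp this with ⟨-, h2⟩ | ⟨h1, h2⟩
      · exact Subtype.ext h2
      · exact absurd h2 (Finset.mem_erase.mp (Finset.mem_filter.mp hu1).1).1
    calc t.card = Nat.card {u // u ∈ t} := (Nat.card_eq_finsetCard t).symm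
      _ ≤ Nat.card {e : E // (∀ w ∈ G.inc e, w ∈ s) ∧ v ∈ G.inc e} :=
          Nat.card_le_card_of_injective _ hInj
      _ ≤ G.degeneracy := hvdeg
  have hfresh : ∃ x : Fin (G.degeneracy + 1), x ∉ t.image co := by
    by_contra hall
    push_neg at hall
    have hsub : (Finset.univ : Finset (Fin (G.degeneracy + 1))) ⊆ t.image co :=
      fun x _ => hall x
    have h1 := Finset.card_le_card hsub
    have h2 := Finset.card_image_le (f := co) (s := t)
    simp only [Finset.card_univ, Fintype.card_fin] at h1
    omega
  obtain ⟨fresh, hfresh⟩ := hfresh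
  refine ⟨Function.update co v fresh, ?_⟩
  intro u hu w hw hadj
  by_cases huv : u = v <;> by_cases hwv : w = v
  · subst huv; subst hwv; exact absurd rfl hadj.ne
  · subst huv
    rw [Function.update_self, Function.update_of_ne hwv]
    intro hEq
    apply hfresh
    rw [hEq]
    exact Finset.mem_image_of_mem co
      (Finset.mem_filter.mpr ⟨Finset.mem_erase.mpr ⟨hwv, hw⟩, hadj⟩)
  · subst hwv
    rw [Function.update_self, Function.update_of_ne huv]
    intro hEq
    apply hfresh
    rw [← hEq]
    exact Finset.mem_image_of_mem co
      (Finset.mem_filter.mpr ⟨Finset.mem_erase.mpr ⟨huv, hu⟩, hadj.symm⟩)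
  · rw [Function.update_of_ne huv, Function.update_of_ne hwv]
    exact hco u (Finset.mem_erase.mpr ⟨huv, hu⟩) w (Finset.mem_erase.mpr ⟨hwv, hw⟩) hadj

lemma greedy [Finite V] [Finite E] (G : Multigraph V E) :
    ∃ co : V → Fin (G.degeneracy + 1),
      ∀ u w, G.toSimple.Adj u w → co u ≠ co w := by
  have : Fintype V := Fintype.ofFinite V
  obtain ⟨co, hco⟩ := greedy_aux G Finset.univ
  exact ⟨co, fun u w h => hco u (Finset.mem_univ u) w (Finset.mem_univ w) h⟩

end Multigraph

lemma hasKMinor_mono {W : Type} {H : SimpleGraph W} {s t : ℕ} (hst : s ≤ t)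
    (h : H.HasKMinor t) : H.HasKMinor s := by
  obtain ⟨B, h1, h2, h3, h4⟩ := h
  exact ⟨fun i => B (Fin.castLE hst i), fun i => h1 _, fun i => h2 _,
    fun i j hij => h3 _ _ (fun hEq => hij (Fin.castLE_injective hst hEq)),
    fun i j hij => h4 _ _ (fun hEq => hij (Fin.castLE_injective hst hEq))⟩

namespace Multigraph

variable {V E : Type}

lemma link_colorable (G : Multigraph V E) (hG : G.Loopless)
    {ℓ : ℕ} (hℓ : 2 ≤ ℓ) (hev : Even ℓ) {k m : ℕ} (c : V → Fin k)
    (hc : ∀ u w, G.toSimple.Adj u w → c u ≠ c w)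
    (f : ℕ → ℕ → ℕ → ℕ)
    (hsymm : ∀ a b₁ b₂, f a b₁ b₂ = f a b₂ b₁)
    (hbound : ∀ a b₁ b₂, a < k → f a b₁ b₂ < m)
    (hconf : ∀ a b cc dd, a < k → b < k → cc < k → dd < k →
      a ≠ b → a ≠ cc → cc ≠ dd → f a b cc ≠ f cc a dd) :
    (G.linkGraph ℓ).toSimple.Colorable m := by
  have hmod : ℓ % 2 = 0 := Nat.even_iff.mp hev
  have h1 : 1 ≤ ℓ / 2 := by omega
  have hlt0 : ℓ / 2 - 1 < ℓ + 1 := by omega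
  have hlt1 : ℓ / 2 < ℓ + 1 := by omega
  have hlt2 : ℓ / 2 + 1 < ℓ + 1 := by omega
  set F : G.Arc ℓ → ℕ := fun A =>
    f (c (A.verts ⟨ℓ / 2, hlt1⟩)).val (c (A.verts ⟨ℓ / 2 - 1, hlt0⟩)).val
      (c (A.verts ⟨ℓ / 2 + 1, hlt2⟩)).val with hF
  have hrev : ∀ A : G.Arc ℓ, F A.reverse = F A := by
    intro A
    have e1 : A.reverse.verts ⟨ℓ / 2, hlt1⟩ = A.verts ⟨ℓ / 2, hlt1⟩ := by
      show A.verts (Fin.rev _) = _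
      congr 1
      refine Fin.ext ?_
      rw [Fin.val_rev]
      show ℓ + 1 - (ℓ / 2 + 1) = ℓ / 2
      omega
    have e0 : A.reverse.verts ⟨ℓ / 2 - 1, hlt0⟩ = A.verts ⟨ℓ / 2 + 1, hlt2⟩ := by
      show A.verts (Fin.rev _) = _
      congr 1
      refine Fin.ext ?_
      rw [Fin.val_rev]
      show ℓ + 1 - (ℓ / 2 - 1 + 1) = ℓ / 2 + 1
      omega
    have e2 : A.reverse.verts ⟨ℓ / 2 + 1, hlt2⟩ = A.verts ⟨ℓ / 2 - 1, hlt0⟩ := by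
      show A.verts (Fin.rev _) = _
      congr 1
      refine Fin.ext ?_
      rw [Fin.val_rev]
      show ℓ + 1 - (ℓ / 2 + 1 + 1) = ℓ / 2 - 1
      omega
    simp only [hF, e0, e1, e2]
    exact hsymm _ _ _
  have hlift : ∀ A B : G.Arc ℓ, G.LinkRel A B → F A = F B := by
    intro A B h
    rw [show B = A.reverse from h, hrev]
  set colA : G.Link ℓ → ℕ := Quot.lift F hlift with hcolA
  have hbnd : ∀ L : G.Link ℓ, colA L < m := by
    intro L
    induction L using Quot.ind with
    | _ A => exact hbound _ _ _ (Fin.is_lt _)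
  have hvcast : ∀ (A : G.Arc (ℓ + 1)) (x y : ℕ) (hx : x < ℓ + 2) (hy : y < ℓ + 2),
      x = y → A.verts ⟨x, hx⟩ = A.verts ⟨y, hy⟩ := by
    intro A x y hx hy h
    subst h
    rfl
  have hadjval : ∀ (A : G.Arc (ℓ + 1)) (x : ℕ) (hx : x < ℓ + 1) (hx' : x < ℓ + 2)
      (hx'' : x + 1 < ℓ + 2),
      (c (A.verts ⟨x, hx'⟩)).val ≠ (c (A.verts ⟨x + 1, hx''⟩)).val := by
    intro A x hx hx' hx''
    have hinc := A.inc_eq ⟨x, hx⟩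
    have hcs : (⟨x, hx⟩ : Fin (ℓ + 1)).castSucc = (⟨x, hx'⟩ : Fin (ℓ + 2)) :=
      Fin.ext (by simp)
    have hsc : (⟨x, hx⟩ : Fin (ℓ + 1)).succ = (⟨x + 1, hx''⟩ : Fin (ℓ + 2)) :=
      Fin.ext (by simp)
    rw [hcs, hsc] at hinc
    have hne' : A.verts ⟨x, hx'⟩ ≠ A.verts ⟨x + 1, hx''⟩ := by
      intro hEq
      apply hG (A.edges ⟨x, hx⟩)
      rw [hinc, hEq]
      exact Sym2.mk_isDiag_iff.mpr rfl
    have hAdj : G.toSimple.Adj (A.verts ⟨x, hx'⟩) (A.verts ⟨x + 1, hx''⟩) :=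
      ⟨hne', A.edges ⟨x, hx⟩, hinc⟩
    exact fun hvaleq => hc _ _ hAdj (Fin.ext hvaleq)
  have key : ∀ A : G.Arc (ℓ + 1), F A.init ≠ F A.tail := by
    intro A
    have hvinit : ∀ (x : ℕ) (hx : x < ℓ + 1) (hx' : x < ℓ + 2),
        A.init.verts ⟨x, hx⟩ = A.verts ⟨x, hx'⟩ := by
      intro x hx hx'
      show A.verts (Fin.castSucc _) = _
      congr 1
      all_goals exact Fin.ext (by simp)
    have hvtail : ∀ (x : ℕ) (hx : x < ℓ + 1) (hx' : x + 1 < ℓ + 2),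
        A.tail.verts ⟨x, hx⟩ = A.verts ⟨x + 1, hx'⟩ := by
      intro x hx hx'
      show A.verts (Fin.succ _) = _
      congr 1
      all_goals exact Fin.ext (by simp)
    have p0 : ℓ / 2 - 1 < ℓ + 2 := by omega
    have p1 : ℓ / 2 < ℓ + 2 := by omega
    have p2 : ℓ / 2 + 1 < ℓ + 2 := by omega
    have p3 : ℓ / 2 + 1 + 1 < ℓ + 2 := by omega
    have einit : F A.init = f (c (A.verts ⟨ℓ / 2, p1⟩)).val
        (c (A.verts ⟨ℓ / 2 - 1, p0⟩)).val (c (A.verts ⟨ℓ / 2 + 1, p2⟩)).val := by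
      simp only [hF]
      rw [hvinit _ hlt1 p1, hvinit _ hlt0 p0, hvinit _ hlt2 p2]
    have etail : F A.tail = f (c (A.verts ⟨ℓ / 2 + 1, p2⟩)).val
        (c (A.verts ⟨ℓ / 2, p1⟩)).val (c (A.verts ⟨ℓ / 2 + 1 + 1, p3⟩)).val := by
      simp only [hF]
      rw [hvtail _ hlt1 (by omega), hvtail _ hlt0 (by omega), hvtail _ hlt2 (by omega)]
      rw [hvcast A (ℓ / 2 - 1 + 1) (ℓ / 2) (by omega) p1 (by omega)]
    rw [einit, etail]
    refine hconf _ _ _ _ (Fin.is_lt _) (Fin.is_lt _) (Fin.is_lt _) (Fin.is_lt _) ?_ ?_ ?_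
    · have := hadjval A (ℓ / 2 - 1) (by omega) p0 (by omega)
      rw [hvcast A (ℓ / 2 - 1 + 1) (ℓ / 2) (by omega) p1 (by omega)] at this
      exact this.symm
    · exact hadjval A (ℓ / 2) (by omega) p1 p2
    · exact hadjval A (ℓ / 2 + 1) (by omega) p2 p3
  refine ⟨SimpleGraph.Coloring.mk (fun L => (⟨colA L, hbnd L⟩ : Fin m)) ?_⟩
  rintro U W ⟨hUW, CL, hCL⟩ hEq
  obtain ⟨A, rfl⟩ := Quot.exists_rep CL
  have hends : s(Link.mk A.init, Link.mk A.tail) = s(U, W) := hCL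
  have hval : colA U = colA W := congrArg Fin.val hEq
  rcases Sym2.eq_iff.mp hends with ⟨hU, hW⟩ | ⟨hU, hW⟩
  · rw [← hU, ← hW] at hval
    exact key A hval
  · rw [← hU, ← hW] at hval
    exact key A hval.symm

end Multigraph


/-- Let `G` be a finite loopless multigraph and `ℓ ≥ 2` even. Assuming
Hadwiger's conjecture for graphs of chromatic number at most 6 (for `L_ℓ(G)`) and the
bound `η(L_ℓ(G)) ≥ degeneracy(G)`, Hadwiger's conjecture holds for `L_ℓ(G)`; and if
`d = degeneracy(G) ≥ 5` then `χ(L_ℓ(G)) ≤ ⌊(2d+5)/3⌋ ≤ d`. -/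
theorem hadwiger_linkGraph_even {V E : Type} [Finite V] [Finite E] (G : Multigraph V E)
    (hG : G.Loopless) (ℓ : ℕ) (hℓ : 2 ≤ ℓ) (heven : Even ℓ)
    (hRST : ∀ n : ℕ, n ≤ 6 → ((G.linkGraph ℓ).toSimple).chromaticNumber = n →
      ((G.linkGraph ℓ).toSimple).HasKMinor n)
    (hdeg : ((G.linkGraph ℓ).toSimple).HasKMinor G.degeneracy) :
    (∀ n : ℕ, ((G.linkGraph ℓ).toSimple).chromaticNumber = n →
      ((G.linkGraph ℓ).toSimple).HasKMinor n) ∧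
    (5 ≤ G.degeneracy →
      ((G.linkGraph ℓ).toSimple).chromaticNumber ≤ (((2 * G.degeneracy + 5) / 3 : ℕ) : ℕ∞) ∧
      (2 * G.degeneracy + 5) / 3 ≤ G.degeneracy) := by
  obtain ⟨c, hc⟩ := Multigraph.greedy G
  have col1 : (G.linkGraph ℓ).toSimple.Colorable (G.degeneracy + 1) :=
    Multigraph.link_colorable G hG hℓ heven c hc (fun a _ _ => a)
      (fun _ _ _ => rfl) (fun _ _ _ ha => ha)
      (fun _ _ _ _ _ _ _ _ _ hac _ => hac)
  have col2 : 5 ≤ G.degeneracy →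
      (G.linkGraph ℓ).toSimple.Colorable ((2 * G.degeneracy + 5) / 3) := by
    intro h5
    have hqr : G.degeneracy - 2 = 3 * ((G.degeneracy - 2) / 3) + (G.degeneracy - 2) % 3 := by
      omega
    have hr3 : (G.degeneracy - 2) % 3 < 3 := by omega
    exact Multigraph.link_colorable G hG hℓ heven c hc
      (phiAux ((G.degeneracy - 2) / 3) ((G.degeneracy - 2) % 3))
      (phiAux_symm _ _)
      (fun a b₁ b₂ ha => phiAux_lt _ _ G.degeneracy a b₁ b₂ hr3 hqr h5 ha)
      (fun a b cc dd ha hb hcc hdd hab hac hcd =>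
        phiAux_conf _ _ (G.degeneracy + 1) a b cc dd (by omega) hr3 ha hcc hab hac hcd)
  constructor
  · intro n hn
    by_cases h5 : 5 ≤ G.degeneracy
    · have hχ : ((G.linkGraph ℓ).toSimple).chromaticNumber ≤
          (((2 * G.degeneracy + 5) / 3 : ℕ) : ℕ∞) := (col2 h5).chromaticNumber_le
      rw [hn] at hχ
      have hn' : n ≤ (2 * G.degeneracy + 5) / 3 := Nat.cast_le.mp hχ
      exact hasKMinor_mono (by omega) hdeg
    · have hχ : ((G.linkGraph ℓ).toSimple).chromaticNumber ≤
          ((G.degeneracy + 1 : ℕ) : ℕ∞) := col1.chromaticNumber_le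
      rw [hn] at hχ
      have hn' : n ≤ G.degeneracy + 1 := Nat.cast_le.mp hχ
      exact hRST n (by omega) hn
  · intro h5
    exact ⟨(col2 h5).chromaticNumber_le, by omega⟩
end
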